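/- arXiv:2510.20133 — 2 statements merged into one kernel-verified Lean document; each statement's English description precedes it below -/
import Mathlib

section
/- The (n+1)-st term of the p-Zassenhaus filtration of the group U_{n+1}(F_p) of upper triangular unipotent (n+1)×(n+1) matrices over F_p is trivial. -/
/-- The subgroup generated by `p`-th powers of elements of `H`. -/
def Subgroup.pPow {G : Type*} [Group G] (H : Subgroup G) (p : ℕ) : Subgroup G :=
  Subgroup.closure {x : G | ∃ h ∈ H, x = h ^ p}

/-- The `p`-Zassenhaus filtration of a group `G`: `zassenhaus p hp G m` is `G_{(m)}`
(with the convention that the value at `0` is `⊤`). -/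
def zassenhaus (p : ℕ) (hp : 2 ≤ p) (G : Type*) [Group G] : ℕ → Subgroup G
  | 0 => ⊤
  | 1 => ⊤
  | (m + 2) =>
      (zassenhaus p hp G ((m + 1) / p + 1)).pPow p ⊔
        ⨆ i : Fin (m + 1),
          ⁅zassenhaus p hp G ((i : ℕ) + 1), zassenhaus p hp G (m + 1 - (i : ℕ))⁆
  decreasing_by
  · exact Nat.succ_lt_succ (Nat.div_lt_self (by omega) (by omega))
  · have := i.isLt; omega
  · have := i.isLt; omega


namespace ZassPaper

abbrev Mat (p n : ℕ) := Matrix (Fin (n + 1)) (Fin (n + 1)) (ZMod p)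

/-- `memV p n d a` : the strictly upper triangular matrix `a` has all entries vanishing
at superdiagonal distance `< d`, i.e. `a i j = 0` whenever `j - i ≤ d - 1`. -/
def memV (p n d : ℕ) (a : Mat p n) : Prop :=
  ∀ i j : Fin (n + 1), (j : ℕ) < (i : ℕ) + d → a i j = 0

lemma memV_mono (p n : ℕ) {d e : ℕ} (h : e ≤ d) {a : Mat p n} (ha : memV p n d a) :
    memV p n e a := fun i j hij => ha i j (by omega)

lemma memV_zero (p n d : ℕ) : memV p n d 0 := fun _ _ _ => rfl

lemma memV_add (p n : ℕ) {d : ℕ} {a b : Mat p n} (ha : memV p n d a) (hb : memV p n d b) :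
    memV p n d (a + b) := by
  intro i j h
  simp [Matrix.add_apply, ha i j h, hb i j h]

lemma memV_mul (p n : ℕ) {d e : ℕ} {a b : Mat p n} (ha : memV p n d a) (hb : memV p n e b) :
    memV p n (d + e) (a * b) := by
  intro i j h
  rw [Matrix.mul_apply]
  apply Finset.sum_eq_zero
  intro k _
  by_cases hk : (k : ℕ) < (i : ℕ) + d
  · rw [ha i k hk, zero_mul]
  · rw [hb k j (by omega), mul_zero]

variable (p n : ℕ) [Fact p.Prime]

def UTset : Set (GL (Fin (n + 1)) (ZMod p)) :=
  {A | ∃ a : Mat p n, memV p n 1 a ∧ (A : Mat p n) = 1 + a}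

lemma UTset_one : (1 : GL (Fin (n + 1)) (ZMod p)) ∈ UTset p n :=
  ⟨0, memV_zero p n 1, by simp⟩

lemma UTset_mul {A B : GL (Fin (n + 1)) (ZMod p)} (hA : A ∈ UTset p n) (hB : B ∈ UTset p n) :
    A * B ∈ UTset p n := by
  obtain ⟨a, ha, hA⟩ := hA
  obtain ⟨b, hb, hB⟩ := hB
  refine ⟨a + b + a * b, ?_, ?_⟩
  · exact memV_add p n (memV_add p n ha hb)
      (memV_mono p n (by omega) (memV_mul p n ha hb))
  · show ((A * B : GL (Fin (n + 1)) (ZMod p)) : Mat p n) = _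
    rw [Units.val_mul, hA, hB]
    noncomm_ring

lemma UTset_pow {A : GL (Fin (n + 1)) (ZMod p)} (hA : A ∈ UTset p n) (k : ℕ) :
    A ^ k ∈ UTset p n := by
  induction k with
  | zero => simpa using UTset_one p n
  | succ k ih => rw [pow_succ]; exact UTset_mul p n ih hA

lemma UTset_inv {A : GL (Fin (n + 1)) (ZMod p)} (hA : A ∈ UTset p n) :
    A⁻¹ ∈ UTset p n := by
  have h1 : A ^ Fintype.card (GL (Fin (n + 1)) (ZMod p)) = 1 := pow_card_eq_one
  have hc : 0 < Fintype.card (GL (Fin (n + 1)) (ZMod p)) := Fintype.card_pos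
  have : A⁻¹ = A ^ (Fintype.card (GL (Fin (n + 1)) (ZMod p)) - 1) := by
    have : A * A ^ (Fintype.card (GL (Fin (n + 1)) (ZMod p)) - 1) = 1 := by
      rw [← pow_succ', Nat.sub_add_cancel hc]
      exact h1
    exact ((inv_eq_of_mul_eq_one_right this).symm).symm
  rw [this]
  exact UTset_pow p n hA _

/-- The group of upper triangular unipotent `(n+1)×(n+1)` matrices over `F_p`,
as a subgroup of `GL (Fin (n+1)) (ZMod p)`. -/
def UT : Subgroup (GL (Fin (n + 1)) (ZMod p)) where
  carrier := UTset p n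
  one_mem' := UTset_one p n
  mul_mem' := UTset_mul p n
  inv_mem' := UTset_inv p n


/-! ### Auxiliary material for `stmt5` -/

lemma memV_neg (p n : ℕ) {d : ℕ} {a : Mat p n} (ha : memV p n d a) : memV p n d (-a) := by
  intro i j h
  simp [Matrix.neg_apply, ha i j h]

lemma memV_sub (p n : ℕ) {d : ℕ} {a b : Mat p n} (ha : memV p n d a) (hb : memV p n d b) :
    memV p n d (a - b) := by
  intro i j h
  simp [Matrix.sub_apply, ha i j h, hb i j h]

lemma memV_pow (p n : ℕ) {d : ℕ} (k : ℕ) {a : Mat p n} (ha : memV p n d a) :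
    memV p n ((k + 1) * d) (a ^ (k + 1)) := by
  induction k with
  | zero => simpa using ha
  | succ k ih =>
      have := memV_mul p n ih ha
      rw [← pow_succ] at this
      have heq : (k + 1) * d + d = (k + 2) * d := by ring
      rw [heq] at this
      exact this

variable (p n : ℕ) [Fact p.Prime]

/-- The matrix underlying an element of `UT p n`. -/
def toMat (A : UT p n) : Mat p n := ((A : GL (Fin (n + 1)) (ZMod p)) : Mat p n)

lemma toMat_mul (A B : UT p n) : toMat p n (A * B) = toMat p n A * toMat p n B := rfl

lemma toMat_one : toMat p n (1 : UT p n) = 1 := rfl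

lemma toMat_pow (A : UT p n) (k : ℕ) : toMat p n (A ^ k) = toMat p n A ^ k := by
  induction k with
  | zero => simp [toMat_one]
  | succ k ih => rw [pow_succ, pow_succ, ← ih]; rfl

lemma toMat_mul_inv (A : UT p n) : toMat p n A * toMat p n A⁻¹ = 1 := by
  rw [← toMat_mul, mul_inv_cancel, toMat_one]

lemma memV_one_toMat (A : UT p n) : memV p n 1 (toMat p n A - 1) := by
  obtain ⟨a, ha, heq⟩ := A.2
  have : toMat p n A - 1 = a := by
    show ((A : GL (Fin (n + 1)) (ZMod p)) : Mat p n) - 1 = a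
    rw [heq]; abel
  rw [this]; exact ha

/-- The subgroup of `UT p n` of matrices congruent to `1` up to superdiagonal distance `d`. -/
def W (d : ℕ) : Subgroup (UT p n) where
  carrier := {A | memV p n d (toMat p n A - 1)}
  one_mem' := by
    show memV p n d (toMat p n 1 - 1)
    rw [toMat_one, sub_self]
    exact memV_zero p n d
  mul_mem' := by
    intro A B hA hB
    show memV p n d (toMat p n (A * B) - 1)
    have key : toMat p n (A * B) - 1 =
        (toMat p n A - 1) + (toMat p n B - 1) + (toMat p n A - 1) * (toMat p n B - 1) := by
      rw [toMat_mul]; noncomm_ring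
    rw [key]
    exact memV_add p n (memV_add p n hA hB)
      (memV_mono p n (by omega) (memV_mul p n hA hB))
  inv_mem' := by
    intro A hA
    show memV p n d (toMat p n A⁻¹ - 1)
    have h1 : toMat p n A * toMat p n A⁻¹ = 1 := toMat_mul_inv p n A
    have hzero : (toMat p n A - 1) + (toMat p n A⁻¹ - 1) +
        (toMat p n A - 1) * (toMat p n A⁻¹ - 1) = 0 := by
      have expand : toMat p n A * toMat p n A⁻¹ - 1 =
          (toMat p n A - 1) + (toMat p n A⁻¹ - 1) +
          (toMat p n A - 1) * (toMat p n A⁻¹ - 1) := by noncomm_ring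
      rw [← expand, h1, sub_self]
    have key : toMat p n A⁻¹ - 1 =
        -((toMat p n A - 1) + (toMat p n A - 1) * (toMat p n A⁻¹ - 1)) := by
      have h2 : ((toMat p n A - 1) + (toMat p n A - 1) * (toMat p n A⁻¹ - 1)) +
          (toMat p n A⁻¹ - 1) = 0 := by rw [← hzero]; abel
      exact eq_neg_of_add_eq_zero_right h2
    rw [key]
    exact memV_neg p n (memV_add p n hA
      (memV_mono p n (by omega) (memV_mul p n hA (memV_one_toMat p n A⁻¹))))

lemma mem_W_iff {d : ℕ} {A : UT p n} : A ∈ W p n d ↔ memV p n d (toMat p n A - 1) :=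
  Iff.rfl

lemma W_mono {d e : ℕ} (h : e ≤ d) : W p n d ≤ W p n e := by
  intro A hA
  exact memV_mono p n h hA

lemma W_one_eq_top (d : ℕ) (hd : d ≤ 1) : (⊤ : Subgroup (UT p n)) ≤ W p n d := by
  intro A _
  exact memV_mono p n hd (memV_one_toMat p n A)

lemma pow_p_mem_W {d : ℕ} {A : UT p n} (hA : A ∈ W p n d) : A ^ p ∈ W p n (p * d) := by
  rw [mem_W_iff] at hA ⊢
  have hp : p.Prime := Fact.out
  have hchar : CharP (Mat p n) p := by infer_instance
  have hcomm : Commute (1 : Mat p n) (toMat p n A - 1) := Commute.one_left _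
  have key : toMat p n (A ^ p) = 1 + (toMat p n A - 1) ^ p := by
    rw [toMat_pow]
    have heq : toMat p n A = 1 + (toMat p n A - 1) := by abel
    conv_lhs => rw [heq]
    rw [add_pow_char_of_commute p hcomm, one_pow]
  rw [key]
  have h2 : (1 : Mat p n) + (toMat p n A - 1) ^ p - 1 = (toMat p n A - 1) ^ p := by abel
  rw [h2]
  have hmem := memV_pow p n (p - 1) hA
  rw [Nat.sub_add_cancel hp.one_le] at hmem
  exact hmem

open scoped commutatorElement in
lemma commutator_mem_W {d e : ℕ} {A B : UT p n} (hA : A ∈ W p n d) (hB : B ∈ W p n e) :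
    ⁅A, B⁆ ∈ W p n (d + e) := by
  rw [mem_W_iff] at hA hB ⊢
  set X := toMat p n A with hX
  set Y := toMat p n B with hY
  set X' := toMat p n A⁻¹ with hX'
  set Y' := toMat p n B⁻¹ with hY'
  have hXX' : X * X' = 1 := toMat_mul_inv p n A
  have hYY' : Y * Y' = 1 := toMat_mul_inv p n B
  have hcomm : toMat p n ⁅A, B⁆ = X * Y * (X' * Y') := by
    show toMat p n (A * B * A⁻¹ * B⁻¹) = _
    rw [toMat_mul, toMat_mul, toMat_mul, mul_assoc]
  have key : toMat p n ⁅A, B⁆ - 1 = (X * Y - Y * X) * (X' * Y') := by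
    rw [hcomm, sub_mul]
    congr 1
    rw [mul_assoc Y X, ← mul_assoc X X' Y', hXX', one_mul, hYY']
  have hXY : X * Y - Y * X = (X - 1) * (Y - 1) - (Y - 1) * (X - 1) := by noncomm_ring
  have hmem1 : memV p n (d + e) (X * Y - Y * X) := by
    rw [hXY]
    refine memV_sub p n (memV_mul p n hA hB) ?_
    have := memV_mul p n hB hA
    rwa [Nat.add_comm e d] at this
  have hc : memV p n 1 (X' * Y' - 1) := by
    have : X' * Y' = toMat p n (A⁻¹ * B⁻¹) := (toMat_mul p n A⁻¹ B⁻¹).symm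
    rw [this]
    exact memV_one_toMat p n _
  have expand : (X * Y - Y * X) * (X' * Y') =
      (X * Y - Y * X) + (X * Y - Y * X) * (X' * Y' - 1) := by noncomm_ring
  rw [key, expand]
  exact memV_add p n hmem1 (memV_mono p n (by omega) (memV_mul p n hmem1 hc))

lemma zass_le (hp : 2 ≤ p) : ∀ m : ℕ, zassenhaus p hp (UT p n) m ≤ W p n m := by
  intro m
  induction m using Nat.strong_induction_on with
  | _ m ih =>
    match m with
    | 0 => rw [zassenhaus]; exact W_one_eq_top p n 0 (by omega)
    | 1 => rw [zassenhaus]; exact W_one_eq_top p n 1 le_rfl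
    | (m + 2) =>
      rw [zassenhaus]
      apply sup_le
      · rw [Subgroup.pPow, Subgroup.closure_le]
        rintro x ⟨h, hh, rfl⟩
        have hd : (m + 1) / p + 1 < m + 2 :=
          Nat.succ_lt_succ (Nat.div_lt_self (by omega) (by omega))
        have hW : h ∈ W p n ((m + 1) / p + 1) := ih _ hd hh
        have := pow_p_mem_W p n hW
        refine W_mono p n ?_ this
        have : m + 1 < ((m + 1) / p + 1) * p :=
          (Nat.div_lt_iff_lt_mul (by omega)).mp (Nat.lt_succ_self _)
        calc m + 2 ≤ ((m + 1) / p + 1) * p := by omega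
          _ = p * ((m + 1) / p + 1) := Nat.mul_comm _ _
      · apply iSup_le
        intro i
        rw [Subgroup.commutator_le]
        intro g hg h hh
        have hi := i.isLt
        have h1 : (i : ℕ) + 1 < m + 2 := by omega
        have h2 : m + 1 - (i : ℕ) < m + 2 := by omega
        have hgW := ih _ h1 hg
        have hhW := ih _ h2 hh
        have := commutator_mem_W p n hgW hhW
        have heq : (i : ℕ) + 1 + (m + 1 - (i : ℕ)) = m + 2 := by omega
        rwa [heq] at this

lemma W_succ_n_le_bot : W p n (n + 1) ≤ ⊥ := by
  intro A hA
  rw [mem_W_iff] at hA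
  have hzero : toMat p n A - 1 = 0 := by
    ext i j
    have : (j : ℕ) < (i : ℕ) + (n + 1) := by
      have := j.isLt; omega
    simpa using hA i j this
  have hmat : toMat p n A = 1 := sub_eq_zero.mp hzero
  have hGL : (A : GL (Fin (n + 1)) (ZMod p)) = 1 := Units.ext hmat
  have : A = 1 := Subtype.ext hGL
  simp [this, Subgroup.mem_bot]

/-- The `(n+1)`-st term of the `p`-Zassenhaus filtration of `U_{n+1}(F_p)` is trivial. -/
theorem stmt5 (p n : ℕ) [Fact p.Prime] (hn : 1 ≤ n) :
    zassenhaus p (Fact.out : p.Prime).two_le (UT p n) (n + 1) = ⊥ := by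
  refine le_antisymm ?_ bot_le
  exact le_trans (zass_le p n _ (n + 1)) (W_succ_n_le_bot p n)

end ZassPaper
end

section
/- Let α : A → B and β : D → C be homomorphisms of abelian groups, and suppose given non-degenerate bilinear pairings ⟨·,·⟩₁ : A × C → F_p and ⟨·,·⟩₂ : B × D → F_p satisfying ⟨α(a), d⟩₂ = ⟨a, β(d)⟩₁ for all a ∈ A, d ∈ D. If A, B, C, D are finite, then the induced pairing coker(α) × ker(β) → F_p, ([b], d) ↦ ⟨b, d⟩₂, is well-defined and non-degenerate. -/
/-- Given adjoint non-degenerate `F_p`-valued pairings on finite abelian groups,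
the induced pairing `coker(α) × ker(β) → F_p` is well-defined and non-degenerate. -/
theorem stmt15 (p : ℕ) [Fact p.Prime]
    {A B C D : Type*} [AddCommGroup A] [AddCommGroup B] [AddCommGroup C] [AddCommGroup D]
    [Finite A] [Finite B] [Finite C] [Finite D]
    (α : A →+ B) (β : D →+ C)
    (e1 : A →+ C →+ ZMod p) (e2 : B →+ D →+ ZMod p)
    (h1l : ∀ a : A, (∀ c : C, e1 a c = 0) → a = 0)
    (h1r : ∀ c : C, (∀ a : A, e1 a c = 0) → c = 0)
    (h2l : ∀ b : B, (∀ d : D, e2 b d = 0) → b = 0)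
    (h2r : ∀ d : D, (∀ b : B, e2 b d = 0) → d = 0)
    (hadj : ∀ (a : A) (d : D), e2 (α a) d = e1 a (β d)) :
    (∀ (a : A), ∀ d ∈ β.ker, e2 (α a) d = 0) ∧
    (∀ b : B, (∀ d ∈ β.ker, e2 b d = 0) → b ∈ α.range) ∧
    (∀ d ∈ β.ker, (∀ b : B, e2 b d = 0) → d = 0) := by
  have hzero : ∀ x : ZMod p, p • x = 0 := by
    intro x
    rw [nsmul_eq_mul, ZMod.natCast_self, zero_mul]
  have hA : ∀ x : A, p • x = 0 := by
    intro x
    apply h1l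
    intro c
    rw [map_nsmul, AddMonoidHom.nsmul_apply, hzero]
  have hC : ∀ x : C, p • x = 0 := by
    intro x
    apply h1r
    intro a
    rw [map_nsmul, hzero]
  have hD : ∀ x : D, p • x = 0 := by
    intro x
    apply h2r
    intro b
    rw [map_nsmul, hzero]
  haveI : Module (ZMod p) A := AddCommGroup.zmodModule hA
  haveI : Module (ZMod p) C := AddCommGroup.zmodModule hC
  haveI : Module (ZMod p) D := AddCommGroup.zmodModule hD
  haveI : Module.Finite (ZMod p) A := Module.Finite.of_finite
  haveI : Module.Finite (ZMod p) C := Module.Finite.of_finite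
  haveI : Module.Finite (ZMod p) D := Module.Finite.of_finite
  -- the pairing e1 as a linear map to the dual
  let ε1 : A →ₗ[ZMod p] Module.Dual (ZMod p) C :=
    { toFun := fun a => (e1 a).toZModLinearMap p
      map_add' := fun a a' => by ext c; simp
      map_smul' := fun r a => by
        ext c
        show (e1 (r • a)) c = r • (e1 a) c
        exact ZMod.map_smul (e1.flip c) r a }
  let ε1' : C →ₗ[ZMod p] Module.Dual (ZMod p) A :=
    { toFun := fun c => (e1.flip c).toZModLinearMap p
      map_add' := fun c c' => by ext a; simp
      map_smul' := fun r c => by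
        ext a
        show (e1 a) (r • c) = r • (e1 a) c
        exact ZMod.map_smul (e1 a) r c }
  have hinj1 : Function.Injective ε1 := by
    intro a a' h
    rw [← sub_eq_zero]
    apply h1l
    intro c
    have h0 : ε1 (a - a') = 0 := by rw [map_sub, h, sub_self]
    have h1 : ε1 (a - a') c = (0 : Module.Dual (ZMod p) C) c := DFunLike.congr_fun h0 c
    exact h1
  have hinj1' : Function.Injective ε1' := by
    intro c c' h
    rw [← sub_eq_zero]
    apply h1r
    intro a
    have h0 : ε1' (c - c') = 0 := by rw [map_sub, h, sub_self]
    have h1 : ε1' (c - c') a = (0 : Module.Dual (ZMod p) A) a := DFunLike.congr_fun h0 a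
    exact h1
  have hfr : Module.finrank (ZMod p) A = Module.finrank (ZMod p) (Module.Dual (ZMod p) C) := by
    have h1 := LinearMap.finrank_le_finrank_of_injective hinj1
    have h2 := LinearMap.finrank_le_finrank_of_injective hinj1'
    rw [Subspace.dual_finrank_eq] at h1 h2
    rw [Subspace.dual_finrank_eq]
    omega
  have hsurj1 : Function.Surjective ε1 :=
    (LinearMap.injective_iff_surjective_of_finrank_eq_finrank hfr).mp hinj1
  -- linear versions of β
  let βₗ : D →ₗ[ZMod p] C := β.toZModLinearMap p
  refine ⟨?_, ?_, ?_⟩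
  · intro a d hd
    rw [AddMonoidHom.mem_ker] at hd
    rw [hadj, hd, map_zero]
  · intro b hb
    -- the functional e2 b vanishes on ker β, factor it through range βₗ
    let f : D →ₗ[ZMod p] ZMod p := (e2 b).toZModLinearMap p
    have hker : LinearMap.ker βₗ ≤ LinearMap.ker f := by
      intro d hd
      rw [LinearMap.mem_ker] at hd ⊢
      exact hb d (by rwa [AddMonoidHom.mem_ker])
    let g0 : (D ⧸ LinearMap.ker βₗ) →ₗ[ZMod p] ZMod p := Submodule.liftQ _ f hker
    let g1 : LinearMap.range βₗ →ₗ[ZMod p] ZMod p := g0 ∘ₗ (βₗ.quotKerEquivRange.symm : LinearMap.range βₗ →ₗ[ZMod p] (D ⧸ LinearMap.ker βₗ))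
    obtain ⟨g, hg⟩ := g1.exists_extend
    have hgβ : ∀ d : D, g (β d) = e2 b d := by
      intro d
      have h1 : g (β d) = g1 ⟨β d, ⟨d, rfl⟩⟩ := by
        rw [← hg]; rfl
      rw [h1]
      show g0 (βₗ.quotKerEquivRange.symm ⟨βₗ d, ⟨d, rfl⟩⟩) = e2 b d
      rw [βₗ.quotKerEquivRange_symm_apply_image d ⟨d, rfl⟩]
      rfl
    obtain ⟨a, ha⟩ := hsurj1 g
    refine ⟨a, ?_⟩
    have : ∀ d : D, e2 (α a - b) d = 0 := by
      intro d
      have hac : ∀ c : C, e1 a c = g c := fun c => DFunLike.congr_fun ha c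
      rw [map_sub, AddMonoidHom.sub_apply, hadj, hac, hgβ, sub_self]
    have h0 := h2l _ this
    rw [sub_eq_zero] at h0
    exact h0
  · intro d _ hd
    exact h2r d hd
end
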